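/- arXiv:2207.10891 — 5 statements merged into one kernel-verified Lean document; each statement's English description precedes it below -/
import Mathlib

section
/- Let A be an m×m Hermitian complex matrix and B an m×n complex matrix such that A − B B^H is positive definite. For every m×n complex matrix V such that the matrix Σ := V^H A V − (V^H B)(V^H B)^H is positive definite, one has det(I_n + (V^H B)^H Σ^{−1} (V^H B)) ≤ det(I_n + B^H (A − B B^H)^{−1} B) (both determinants are real and ≥ 1). (This is the inequality part of Corollary 2: no receive combining matrix V can yield a larger value of the spectral-efficiency determinant than the value attained by MMSE combining.) -/
open Matrix
open scoped ComplexOrder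

lemma detL1 {k : ℕ} {P : Matrix (Fin k) (Fin k) ℂ} (hP : P.PosSemidef) :
    1 ≤ (1 + P).det := by
  have hH := hP.isHermitian
  set U : Matrix (Fin k) (Fin k) ℂ := (hH.eigenvectorUnitary : Matrix (Fin k) (Fin k) ℂ)
  have hU : U * star U = 1 := (Matrix.mem_unitaryGroup_iff).mp hH.eigenvectorUnitary.2
  have hspec := hH.spectral_theorem
  set d : Fin k → ℂ := RCLike.ofReal ∘ hH.eigenvalues with hd
  have key : 1 + P = U * (1 + diagonal d) * star U := by
    rw [mul_add, add_mul, mul_one, hU, hspec, Unitary.conjStarAlgAut_apply]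
  have hU' : star U * U = 1 := (Matrix.mem_unitaryGroup_iff').mp hH.eigenvectorUnitary.2
  rw [key, det_mul, det_mul, mul_comm, ← mul_assoc, ← det_mul, hU', det_one, one_mul]
  have : (1 : Matrix (Fin k) (Fin k) ℂ) + diagonal d = diagonal (1 + d) := by
    rw [← diagonal_one, diagonal_add]
    rfl
  rw [this, det_diagonal]
  have : ∏ i, (1 + d) i = ((∏ i, (1 + hH.eigenvalues i) : ℝ) : ℂ) := by
    push_cast
    simp [hd]
  rw [this, show (1:ℂ) = ((1:ℝ):ℂ) from rfl, Complex.real_le_real]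
  calc (1:ℝ) = ∏ _i : Fin k, 1 := by simp
    _ ≤ ∏ i, (1 + hH.eigenvalues i) :=
      Finset.prod_le_prod (fun i _ => zero_le_one)
        (fun i _ => by linarith [hP.eigenvalues_nonneg i])

open scoped MatrixOrder in
lemma detL2 {k : ℕ} {X D : Matrix (Fin k) (Fin k) ℂ} (hX : X.PosDef) (hD : D.PosSemidef) :
    X.det ≤ (X + D).det := by
  set S := CFC.sqrt X with hSdef
  have hS : S * S = X := CFC.sqrt_mul_sqrt_self X hX.posSemidef.nonneg
  have hSH : S.IsHermitian := (CFC.sqrt_nonneg X).posSemidef.isHermitian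
  have hdX : (0:ℂ) < X.det := hX.det_pos
  have hdetS : IsUnit S.det := by
    refine isUnit_iff_ne_zero.mpr fun h => ?_
    have : X.det = 0 := by rw [← hS, det_mul, h, mul_zero]
    exact hdX.ne' this
  have hSinv : S * S⁻¹ = 1 := mul_nonsing_inv S hdetS
  have hSinv' : S⁻¹ * S = 1 := nonsing_inv_mul S hdetS
  have hSiH : S⁻¹ᴴ = S⁻¹ := by rw [conjTranspose_nonsing_inv, hSH.eq]
  have hP : (S⁻¹ * D * S⁻¹).PosSemidef := by
    have := hD.conjTranspose_mul_mul_same S⁻¹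
    rwa [hSiH] at this
  have key : X + D = S * (1 + S⁻¹ * D * S⁻¹) * S := by
    rw [mul_add, add_mul, mul_one, hS]
    congr 1
    simp only [Matrix.mul_assoc]
    rw [hSinv', mul_one, ← Matrix.mul_assoc, hSinv, one_mul]
  rw [key, det_mul, det_mul]
  calc X.det = X.det * 1 := (mul_one _).symm
    _ ≤ X.det * (1 + S⁻¹ * D * S⁻¹).det :=
      mul_le_mul_of_nonneg_left (detL1 hP) hdX.le
    _ = S.det * (1 + S⁻¹ * D * S⁻¹).det * S.det := by
      rw [← hS, det_mul]; ring

lemma keyPSD {p q : ℕ} (W G : Matrix (Fin p) (Fin q) ℂ) (Sg : Matrix (Fin q) (Fin q) ℂ)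
    (hWW : Wᴴ * W = Sg) (hSg : Sg.PosDef) :
    (Gᴴ * G - Gᴴ * W * Sg⁻¹ * (Wᴴ * G)).PosSemidef := by
  have hdetSg : IsUnit Sg.det := isUnit_iff_ne_zero.mpr hSg.det_pos.ne'
  have hSgiH : Sg⁻¹ᴴ = Sg⁻¹ := by rw [conjTranspose_nonsing_inv, hSg.isHermitian.eq]
  have hPrH : (W * Sg⁻¹ * Wᴴ)ᴴ = W * Sg⁻¹ * Wᴴ := by
    rw [conjTranspose_mul, conjTranspose_mul, hSgiH, conjTranspose_conjTranspose,
      Matrix.mul_assoc]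
  have hidem : (W * Sg⁻¹ * Wᴴ) * (W * Sg⁻¹ * Wᴴ) = W * Sg⁻¹ * Wᴴ := by
    have h1 : (W * Sg⁻¹ * Wᴴ) * (W * Sg⁻¹ * Wᴴ) = W * (Sg⁻¹ * Sg * Sg⁻¹) * Wᴴ := by
      rw [← hWW]; simp only [Matrix.mul_assoc]
    rw [h1, nonsing_inv_mul Sg hdetSg, one_mul]
  have hQ : (1 - W * Sg⁻¹ * Wᴴ).PosSemidef := by
    have h1 : (1 - W * Sg⁻¹ * Wᴴ)ᴴ * (1 - W * Sg⁻¹ * Wᴴ) = 1 - W * Sg⁻¹ * Wᴴ := by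
      rw [conjTranspose_sub, conjTranspose_one, hPrH]
      have expand : (1 - W * Sg⁻¹ * Wᴴ) * (1 - W * Sg⁻¹ * Wᴴ)
          = 1 - W * Sg⁻¹ * Wᴴ - W * Sg⁻¹ * Wᴴ + (W * Sg⁻¹ * Wᴴ) * (W * Sg⁻¹ * Wᴴ) := by
        noncomm_ring
      rw [expand, hidem]; abel
    have := posSemidef_conjTranspose_mul_self (1 - W * Sg⁻¹ * Wᴴ)
    rwa [h1] at this
  have h2 : Gᴴ * (1 - W * Sg⁻¹ * Wᴴ) * G = Gᴴ * G - Gᴴ * W * Sg⁻¹ * (Wᴴ * G) := by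
    rw [Matrix.mul_sub, Matrix.sub_mul, Matrix.mul_one]
    congr 1
    simp only [Matrix.mul_assoc]
  rw [← h2]
  exact hQ.conjTranspose_mul_mul_same G

open scoped MatrixOrder

/-- Inequality part of Corollary 2: no receive combining matrix `V` yields a larger
spectral-efficiency determinant than the value attained by MMSE combining. -/
theorem stmt0 {m n : ℕ} (A : Matrix (Fin m) (Fin m) ℂ) (B : Matrix (Fin m) (Fin n) ℂ)
    (hA : A.IsHermitian) (hM : (A - B * Bᴴ).PosDef)
    (V : Matrix (Fin m) (Fin n) ℂ)
    (hSig : (Vᴴ * A * V - (Vᴴ * B) * (Vᴴ * B)ᴴ).PosDef) :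
    1 ≤ (1 + (Vᴴ * B)ᴴ * (Vᴴ * A * V - (Vᴴ * B) * (Vᴴ * B)ᴴ)⁻¹ * (Vᴴ * B)).det ∧
    1 ≤ (1 + Bᴴ * (A - B * Bᴴ)⁻¹ * B).det ∧
    (1 + (Vᴴ * B)ᴴ * (Vᴴ * A * V - (Vᴴ * B) * (Vᴴ * B)ᴴ)⁻¹ * (Vᴴ * B)).det ≤
      (1 + Bᴴ * (A - B * Bᴴ)⁻¹ * B).det := by
  set M : Matrix (Fin m) (Fin m) ℂ := A - B * Bᴴ with hMdef
  have hC : (Vᴴ * B)ᴴ = Bᴴ * V := by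
    rw [conjTranspose_mul, conjTranspose_conjTranspose]
  have hSgeq : Vᴴ * A * V - Vᴴ * B * (Vᴴ * B)ᴴ = Vᴴ * M * V := by
    rw [hC, hMdef]
    simp only [Matrix.mul_sub, Matrix.sub_mul, Matrix.mul_assoc]
  rw [hSgeq] at hSig ⊢
  obtain ⟨S, hSH, hS⟩ : ∃ S : Matrix (Fin m) (Fin m) ℂ, S.IsHermitian ∧ S * S = M :=
    ⟨CFC.sqrt M, (CFC.sqrt_nonneg M).posSemidef.isHermitian,
      CFC.sqrt_mul_sqrt_self M hM.posSemidef.nonneg⟩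
  have hdetS : IsUnit S.det := by
    refine isUnit_iff_ne_zero.mpr fun h => ?_
    have : M.det = 0 := by rw [← hS, det_mul, h, mul_zero]
    exact hM.det_pos.ne' this
  have hSinv : S * S⁻¹ = 1 := mul_nonsing_inv S hdetS
  have hSinv' : S⁻¹ * S = 1 := nonsing_inv_mul S hdetS
  have hSiH : S⁻¹ᴴ = S⁻¹ := by rw [conjTranspose_nonsing_inv, hSH.eq]
  have hWW : (S * V)ᴴ * (S * V) = Vᴴ * M * V := by
    rw [conjTranspose_mul, hSH.eq, ← hS]
    simp only [Matrix.mul_assoc]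
  have hGH : (S⁻¹ * B)ᴴ = Bᴴ * S⁻¹ := by rw [conjTranspose_mul, hSiH]
  have hGW : (S⁻¹ * B)ᴴ * (S * V) = Bᴴ * V := by
    rw [hGH, Matrix.mul_assoc, ← Matrix.mul_assoc S⁻¹, hSinv', Matrix.one_mul]
  have hWG : (S * V)ᴴ * (S⁻¹ * B) = Vᴴ * B := by
    rw [conjTranspose_mul, hSH.eq, Matrix.mul_assoc, ← Matrix.mul_assoc S, hSinv,
      Matrix.one_mul]
  have hGG : (S⁻¹ * B)ᴴ * (S⁻¹ * B) = Bᴴ * M⁻¹ * B := by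
    rw [hGH, ← hS, Matrix.mul_inv_rev]
    simp only [Matrix.mul_assoc]
  have key := keyPSD (S * V) (S⁻¹ * B) (Vᴴ * M * V) hWW hSig
  rw [hGG, hGW, hWG, ← hC] at key
  have hT1psd : ((Vᴴ * B)ᴴ * (Vᴴ * M * V)⁻¹ * (Vᴴ * B)).PosSemidef :=
    hSig.inv.posSemidef.conjTranspose_mul_mul_same (Vᴴ * B)
  have hT2psd : (Bᴴ * M⁻¹ * B).PosSemidef :=
    hM.inv.posSemidef.conjTranspose_mul_mul_same B
  have hXpd : (1 + (Vᴴ * B)ᴴ * (Vᴴ * M * V)⁻¹ * (Vᴴ * B)).PosDef :=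
    Matrix.PosDef.add_posSemidef Matrix.PosDef.one hT1psd
  refine ⟨detL1 hT1psd, detL1 hT2psd, ?_⟩
  have h := detL2 hXpd key
  have hsum : 1 + (Vᴴ * B)ᴴ * (Vᴴ * M * V)⁻¹ * (Vᴴ * B) +
      (Bᴴ * M⁻¹ * B - (Vᴴ * B)ᴴ * (Vᴴ * M * V)⁻¹ * (Vᴴ * B)) = 1 + Bᴴ * M⁻¹ * B := by
    abel
  rwa [hsum] at h
end

section
/- Let A be an m×m Hermitian positive definite complex matrix and B an m×n complex matrix of full column rank (i.e., B is injective as a linear map) such that A − B B^H is positive definite. Set V := A^{−1} B, D := V^H B, and Σ := V^H A V − D D^H. Then Σ is positive definite and D^H Σ^{−1} D = B^H (A − B B^H)^{−1} B; in particular the MMSE combining matrix V = A^{−1} B attains the maximum value det(I_n + B^H (A − B B^H)^{−1} B) of the determinant det(I_n + D^H Σ^{−1} D). (This is the attainment part of Corollary 2.) -/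
open Matrix
open scoped ComplexOrder

/-- If `M` is positive definite and `B` is injective, then `Bᴴ M B` is positive definite. -/
lemma posDef_conj_of_injective {m n : ℕ} {M : Matrix (Fin m) (Fin m) ℂ}
    (hM : M.PosDef) (B : Matrix (Fin m) (Fin n) ℂ) (hB : Function.Injective B.mulVec) :
    (Bᴴ * M * B).PosDef := by
  refine PosDef.of_dotProduct_mulVec_pos (isHermitian_conjTranspose_mul_mul B hM.1) fun x hx => ?_
  have hBx : B *ᵥ x ≠ 0 := by
    intro h
    exact hx (hB (h.trans (B.mulVec_zero).symm))
  simpa only [star_mulVec, dotProduct_mulVec, vecMul_vecMul] using hM.dotProduct_mulVec_pos hBx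

/-- Attainment part of Corollary 2: the MMSE combining matrix `V = A⁻¹ B` makes
`Σ = Vᴴ A V − D Dᴴ` positive definite and attains
`Dᴴ Σ⁻¹ D = Bᴴ (A − B Bᴴ)⁻¹ B`, hence the maximal determinant value. -/
theorem stmt1 {m n : ℕ} (A : Matrix (Fin m) (Fin m) ℂ) (B : Matrix (Fin m) (Fin n) ℂ)
    (hA : A.PosDef) (hB : Function.Injective B.mulVec)
    (hM : (A - B * Bᴴ).PosDef)
    (V : Matrix (Fin m) (Fin n) ℂ) (hV : V = A⁻¹ * B)
    (D : Matrix (Fin n) (Fin n) ℂ) (hD : D = Vᴴ * B)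
    (S : Matrix (Fin n) (Fin n) ℂ) (hS : S = Vᴴ * A * V - D * Dᴴ) :
    S.PosDef ∧ Dᴴ * S⁻¹ * D = Bᴴ * (A - B * Bᴴ)⁻¹ * B ∧
    (1 + Dᴴ * S⁻¹ * D).det = (1 + Bᴴ * (A - B * Bᴴ)⁻¹ * B).det := by
  set M : Matrix (Fin m) (Fin m) ℂ := A - B * Bᴴ with hMdef
  have hAu : IsUnit A.det := (Matrix.isUnit_iff_isUnit_det A).mp hA.isUnit
  have hMu : IsUnit M.det := (Matrix.isUnit_iff_isUnit_det M).mp hM.isUnit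
  have hAinvA : A⁻¹ * A = 1 := nonsing_inv_mul A hAu
  have hAAinv : A * A⁻¹ = 1 := mul_nonsing_inv A hAu
  have hMMinv : M * M⁻¹ = 1 := mul_nonsing_inv M hMu
  have hAiH : A⁻¹ᴴ = A⁻¹ := hA.1.inv.eq
  have hVH : Vᴴ = Bᴴ * A⁻¹ := by rw [hV, conjTranspose_mul, hAiH]
  have hD' : D = Bᴴ * A⁻¹ * B := by rw [hD, hVH]
  have hDH : Dᴴ = D := by
    rw [hD', conjTranspose_mul, conjTranspose_mul, hAiH, conjTranspose_conjTranspose,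
      Matrix.mul_assoc]
  -- auxiliary cancellation facts
  have hAAB : A * (A⁻¹ * B) = B := by rw [← Matrix.mul_assoc, hAAinv, Matrix.one_mul]
  have hMB : M * (M⁻¹ * B) = B := by rw [← Matrix.mul_assoc, hMMinv, Matrix.one_mul]
  have hcancel : ∀ (Y : Matrix (Fin m) (Fin n) ℂ), A⁻¹ * (A * Y) = Y := fun Y => by
    rw [← Matrix.mul_assoc, hAinvA, Matrix.one_mul]
  -- Vᴴ A V = D
  have hVAV : Vᴴ * A * V = D := by
    rw [hVH, hV, hD', Matrix.mul_assoc (Bᴴ * A⁻¹), hAAB]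
  -- S = D - D * D
  have hSDD : S = D - D * D := by rw [hS, hVAV, hDH]
  -- S = Vᴴ M V
  have hS' : S = Vᴴ * M * V := by
    rw [hSDD, hVH, hV, hMdef, hD']
    simp only [Matrix.mul_sub, Matrix.sub_mul, Matrix.mul_assoc, hcancel]
  have hVinj : Function.Injective V.mulVec := by
    rw [hV]
    intro x y hxy
    apply hB
    calc B *ᵥ x = A *ᵥ ((A⁻¹ * B) *ᵥ x) := by rw [mulVec_mulVec, hAAB]
      _ = A *ᵥ ((A⁻¹ * B) *ᵥ y) := by rw [hxy]
      _ = B *ᵥ y := by rw [mulVec_mulVec, hAAB]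
  have hSpd : S.PosDef := by
    have := posDef_conj_of_injective hM V hVinj
    rwa [← hS'] at this
  set X : Matrix (Fin n) (Fin n) ℂ := Bᴴ * M⁻¹ * B with hXdef
  have hXpd : X.PosDef := posDef_conj_of_injective hM.inv B hB
  have hXu : IsUnit X.det := (Matrix.isUnit_iff_isUnit_det X).mp hXpd.isUnit
  have hXXinv : X * X⁻¹ = 1 := mul_nonsing_inv X hXu
  have hXH : Xᴴ = X := hXpd.1.eq
  -- key identity : D * (1 + X) = X
  have hKey : D * (1 + X) = X := by
    calc D * (1 + X)
        = Bᴴ * A⁻¹ * ((M + B * Bᴴ) * (M⁻¹ * B)) := by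
          rw [hD', hXdef]
          simp only [Matrix.mul_add, Matrix.add_mul, Matrix.mul_one, Matrix.mul_assoc, hMB]
      _ = Bᴴ * A⁻¹ * (A * (M⁻¹ * B)) := by
          congr 1
          congr 1
          rw [hMdef]; abel
      _ = X := by
          rw [hXdef, Matrix.mul_assoc Bᴴ A⁻¹, hcancel, Matrix.mul_assoc]
  -- transposed key identity : (1 + X) * D = X
  have hKey' : (1 + X) * D = X := by
    have := congrArg conjTranspose hKey
    rwa [conjTranspose_mul, hDH, conjTranspose_add, conjTranspose_one, hXH] at this
  -- D * ((1+X) X⁻¹ (1+X)) = 1 + X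
  have hDinv : D * ((1 + X) * X⁻¹ * (1 + X)) = 1 + X := by
    calc D * ((1 + X) * X⁻¹ * (1 + X))
        = (D * (1 + X)) * (X⁻¹ * (1 + X)) := by simp only [Matrix.mul_assoc]
      _ = (X * X⁻¹) * (1 + X) := by rw [hKey, ← Matrix.mul_assoc]
      _ = 1 + X := by rw [hXXinv, Matrix.one_mul]
  -- explicit inverse of S
  have hSinv : S⁻¹ = (1 + X) * X⁻¹ * (1 + X) := by
    apply inv_eq_right_inv
    rw [hSDD, Matrix.sub_mul, Matrix.mul_assoc D D, hDinv, hKey]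
    abel
  have hMain : Dᴴ * S⁻¹ * D = X := by
    rw [hDH, hSinv]
    calc D * ((1 + X) * X⁻¹ * (1 + X)) * D
        = (D * (1 + X)) * X⁻¹ * ((1 + X) * D) := by simp only [Matrix.mul_assoc]
      _ = X * X⁻¹ * X := by rw [hKey, hKey', Matrix.mul_assoc, Matrix.mul_assoc]
      _ = X := by rw [hXXinv, Matrix.one_mul]
  exact ⟨hSpd, hMain, by rw [hMain]⟩
end

section
/- Let T be an M×M Hermitian complex matrix and G an M×N complex matrix such that T − G G^H is positive definite. Then: (i) for every N×M complex matrix A such that Σ := A T A^H − (A G)(A G)^H is positive definite, det(I_N + (A G)^H Σ^{−1} (A G)) ≤ det(I_N + G^H (T − G G^H)^{−1} G); and (ii) if moreover T is positive definite and G has full column rank, then A := (T^{−1} G)^H attains equality, i.e., with D := A G and Σ := A T A^H − D D^H one has Σ positive definite and D^H Σ^{−1} D = G^H (T − G G^H)^{−1} G. (This is Corollary 4: the LSFD coefficient matrix A_k = (T^{−1} G)^H maximizes the large-scale-fading-decoding spectral-efficiency determinant.) -/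
open Matrix
open scoped ComplexOrder

section Helpers
variable {m n : Type*} [Fintype m] [Fintype n] [DecidableEq m] [DecidableEq n]

omit [DecidableEq m] [DecidableEq n] in
lemma myPosDefConj {X : Matrix m m ℂ} (hX : X.PosDef) (B : Matrix m n ℂ)
    (hB : Function.Injective B.mulVec) : (Bᴴ * X * B).PosDef := by
  refine PosDef.of_dotProduct_mulVec_pos (isHermitian_conjTranspose_mul_mul B hX.1) fun x hx => ?_
  have hBx : B.mulVec x ≠ 0 := fun h => hx (hB (h.trans (B.mulVec_zero).symm))
  simpa only [star_mulVec, dotProduct_mulVec, vecMul_vecMul] using hX.dotProduct_mulVec_pos hBx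

lemma myPosDefOfDet {X : Matrix n n ℂ} (hX : X.PosSemidef) (hdet : X.det ≠ 0) :
    X.PosDef := by
  refine PosDef.of_dotProduct_mulVec_pos hX.1 fun x hx => ?_
  rcases (hX.dotProduct_mulVec_nonneg x).lt_or_eq with h | h
  · exact h
  · exfalso
    have h0 := (hX.dotProduct_mulVec_zero_iff x).mp h.symm
    have hinj := Matrix.mulVec_injective_iff_isUnit.mpr
      ((Matrix.isUnit_iff_isUnit_det _).mpr (isUnit_iff_ne_zero.mpr hdet))
    exact hx (hinj (h0.trans (X.mulVec_zero).symm))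

open scoped MatrixOrder in
noncomputable def mySqrt (X : Matrix n n ℂ) : Matrix n n ℂ := CFC.sqrt X

open scoped MatrixOrder in
lemma mySqrt_mul_self {X : Matrix n n ℂ} (hX : X.PosSemidef) : mySqrt X * mySqrt X = X :=
  CFC.sqrt_mul_sqrt_self X (Matrix.nonneg_iff_posSemidef.mpr hX)

open scoped MatrixOrder in
lemma mySqrt_posSemidef (X : Matrix n n ℂ) : (mySqrt X).PosSemidef :=
  Matrix.nonneg_iff_posSemidef.mp (CFC.sqrt_nonneg X)

lemma myPosDefSqrt {X : Matrix n n ℂ} (hX : X.PosDef) : (mySqrt X).PosDef := by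
  apply myPosDefOfDet (mySqrt_posSemidef X)
  intro h
  have hd : X.det = 0 := by
    rw [← mySqrt_mul_self hX.posSemidef, det_mul, h, mul_zero]
  exact hX.det_pos.ne' hd

lemma myOneLeDet {F : Matrix n n ℂ} (hF : F.PosSemidef) : 1 ≤ (1 + F).det := by
  have hsp := hF.1.spectral_theorem
  rw [Unitary.conjStarAlgAut_apply] at hsp
  set U : Matrix n n ℂ := (hF.1.eigenvectorUnitary : Matrix n n ℂ)
  have hU : U * star U = 1 := mem_unitaryGroup_iff.mp hF.1.eigenvectorUnitary.2
  have h1 : (1 + F) = U * (1 + diagonal (RCLike.ofReal ∘ hF.1.eigenvalues)) * star U := by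
    rw [mul_add, add_mul, mul_one, hU, ← hsp]
  have hU' : star U * U = 1 := mem_unitaryGroup_iff'.mp hF.1.eigenvectorUnitary.2
  rw [h1, det_mul, det_mul, mul_comm, ← mul_assoc, ← det_mul, ← det_mul, hU', one_mul]
  have : (1 : Matrix n n ℂ) + diagonal (RCLike.ofReal ∘ hF.1.eigenvalues)
      = diagonal (fun i => ((1 + hF.1.eigenvalues i : ℝ) : ℂ)) := by
    rw [← diagonal_one, diagonal_add]
    congr 1; funext i; simp
  rw [this, det_diagonal]
  have : ∏ i, ((1 + hF.1.eigenvalues i : ℝ) : ℂ)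
      = ((∏ i, (1 + hF.1.eigenvalues i) : ℝ) : ℂ) := by
    push_cast; ring
  rw [this, ← Complex.ofReal_one, Complex.real_le_real]
  calc (1:ℝ) = ∏ _i : n, 1 := by simp
    _ ≤ ∏ i, (1 + hF.1.eigenvalues i) :=
      Finset.prod_le_prod (fun i _ => zero_le_one)
        (fun i _ => by linarith [hF.eigenvalues_nonneg i])

lemma myDetLe {A E : Matrix n n ℂ} (hA : A.PosDef) (hE : E.PosSemidef) :
    A.det ≤ (A + E).det := by
  set R := mySqrt A with hRdef
  have hRR : R * R = A := mySqrt_mul_self hA.posSemidef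
  have hR : R.PosDef := myPosDefSqrt hA
  have hRH : Rᴴ = R := hR.1
  have hRd : IsUnit R.det := isUnit_iff_ne_zero.mpr hR.det_pos.ne'
  have hRinv : R * R⁻¹ = 1 := mul_nonsing_inv _ hRd
  have hRinv' : R⁻¹ * R = 1 := nonsing_inv_mul _ hRd
  have hF : (R⁻¹ * E * R⁻¹).PosSemidef := by
    have := hE.conjTranspose_mul_mul_same (R⁻¹)
    rwa [conjTranspose_nonsing_inv, hRH] at this
  have key : R * (1 + R⁻¹ * E * R⁻¹) * R = A + E := by
    rw [mul_add, mul_one, add_mul, hRR]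
    simp only [← Matrix.mul_assoc]
    rw [hRinv, one_mul, Matrix.mul_assoc, hRinv', mul_one]
  calc A.det = A.det * 1 := (mul_one _).symm
    _ ≤ A.det * (1 + R⁻¹ * E * R⁻¹).det :=
        mul_le_mul_of_nonneg_left (myOneLeDet hF) hA.det_pos.le
    _ = (A + E).det := by
        rw [← key, det_mul, det_mul, ← hRR, det_mul]; ring

end Helpers

/-- Corollary 4: (i) no LSFD coefficient matrix `A` yields a larger
spectral-efficiency determinant than `det(I_N + Gᴴ (T − G Gᴴ)⁻¹ G)`, and
(ii) the choice `A = (T⁻¹ G)ᴴ` attains this value. -/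
theorem stmt2 {M N : ℕ} (T : Matrix (Fin M) (Fin M) ℂ) (G : Matrix (Fin M) (Fin N) ℂ)
    (hT : T.IsHermitian) (hM : (T - G * Gᴴ).PosDef) :
    (∀ A : Matrix (Fin N) (Fin M) ℂ,
      (A * T * Aᴴ - (A * G) * (A * G)ᴴ).PosDef →
      (1 + (A * G)ᴴ * (A * T * Aᴴ - (A * G) * (A * G)ᴴ)⁻¹ * (A * G)).det ≤
        (1 + Gᴴ * (T - G * Gᴴ)⁻¹ * G).det) ∧
    (T.PosDef → Function.Injective G.mulVec →
      ∀ (A : Matrix (Fin N) (Fin M) ℂ) (D S : Matrix (Fin N) (Fin N) ℂ),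
        A = (T⁻¹ * G)ᴴ → D = A * G → S = A * T * Aᴴ - D * Dᴴ →
        S.PosDef ∧ Dᴴ * S⁻¹ * D = Gᴴ * (T - G * Gᴴ)⁻¹ * G) := by
  constructor
  · -- Part (i)
    intro A hS
    set R := mySqrt (T - G * Gᴴ) with hRdef
    have hRR : R * R = T - G * Gᴴ := mySqrt_mul_self hM.posSemidef
    have hR : R.PosDef := myPosDefSqrt hM
    have hRH : Rᴴ = R := hR.1
    have hRd : IsUnit R.det := isUnit_iff_ne_zero.mpr hR.det_pos.ne'
    have hRiH : (R⁻¹)ᴴ = R⁻¹ := by rw [conjTranspose_nonsing_inv, hRH]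
    clear_value R
    have hSigma : A * T * Aᴴ - (A * G) * (A * G)ᴴ = A * (T - G * Gᴴ) * Aᴴ := by
      simp only [conjTranspose_mul, Matrix.mul_sub, Matrix.sub_mul, Matrix.mul_assoc]
    rw [hSigma] at hS ⊢
    set Sg := A * (T - G * Gᴴ) * Aᴴ with hSgdef
    clear_value Sg
    have hSgH : Sgᴴ = Sg := hS.1
    have hSgd : IsUnit Sg.det := isUnit_iff_ne_zero.mpr hS.det_pos.ne'
    have hSgiH : (Sg⁻¹)ᴴ = Sg⁻¹ := by rw [conjTranspose_nonsing_inv, hSgH]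
    set B := R * Aᴴ with hBdef
    clear_value B
    have hBH : Bᴴ = A * R := by
      rw [hBdef, conjTranspose_mul, conjTranspose_conjTranspose, hRH]
    have hBB : Bᴴ * B = Sg := by
      rw [hBH, hBdef, hSgdef, ← hRR]
      simp only [Matrix.mul_assoc]
    set P := B * Sg⁻¹ * Bᴴ with hPdef
    clear_value P
    have hPH : Pᴴ = P := by
      rw [hPdef]
      simp only [conjTranspose_mul, conjTranspose_conjTranspose, hSgiH, Matrix.mul_assoc]
    have hPP : P * P = P := by
      have h1 : P * P = B * Sg⁻¹ * (Bᴴ * B) * Sg⁻¹ * Bᴴ := by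
        rw [hPdef]; simp only [Matrix.mul_assoc]
      rw [h1, hBB, Matrix.mul_assoc B Sg⁻¹ Sg, nonsing_inv_mul _ hSgd, Matrix.mul_one, hPdef]
    set H := R⁻¹ * G with hHdef
    clear_value H
    have hHH : Hᴴ = Gᴴ * R⁻¹ := by rw [hHdef, conjTranspose_mul, hRiH]
    have hX : (A * G)ᴴ * Sg⁻¹ * (A * G) = Hᴴ * P * H := by
      rw [hHH, hPdef, hBH, hBdef, hHdef, conjTranspose_mul]
      simp only [Matrix.mul_assoc]
      rw [nonsing_inv_mul_cancel_left _ _ hRd, mul_nonsing_inv_cancel_left _ _ hRd]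
    have hY : Gᴴ * (T - G * Gᴴ)⁻¹ * G = Hᴴ * H := by
      rw [hHH, hHdef, ← hRR, Matrix.mul_inv_rev]
      simp only [Matrix.mul_assoc]
    have h2 : Hᴴ * P * H = (P * H)ᴴ * (P * H) := by
      calc Hᴴ * P * H = Hᴴ * (P * P) * H := by rw [hPP]
        _ = (P * H)ᴴ * (P * H) := by
            rw [conjTranspose_mul, hPH]; simp only [Matrix.mul_assoc]
    have h3 : Hᴴ * H - Hᴴ * P * H = ((1 - P) * H)ᴴ * ((1 - P) * H) := by
      have h1P : (1 - P) * (1 - P) = 1 - P := by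
        simp only [Matrix.mul_sub, Matrix.sub_mul, Matrix.mul_one, Matrix.one_mul, hPP]
        abel
      calc Hᴴ * H - Hᴴ * P * H = Hᴴ * ((1 - P) * H) := by
            simp only [Matrix.sub_mul, Matrix.mul_sub, Matrix.one_mul, Matrix.mul_assoc]
        _ = Hᴴ * ((1 - P) * ((1 - P) * H)) := by rw [← Matrix.mul_assoc (1 - P), h1P]
        _ = ((1 - P) * H)ᴴ * ((1 - P) * H) := by
            rw [conjTranspose_mul, conjTranspose_sub, conjTranspose_one, hPH]
            simp only [Matrix.mul_assoc]
    have h1X : (1 + (A * G)ᴴ * Sg⁻¹ * (A * G)).PosDef := by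
      rw [hX, h2]
      exact Matrix.PosDef.add_posSemidef Matrix.PosDef.one
        (posSemidef_conjTranspose_mul_self _)
    have hEpsd : (((1 - P) * H)ᴴ * ((1 - P) * H)).PosSemidef :=
      posSemidef_conjTranspose_mul_self _
    have key := myDetLe h1X hEpsd
    have heq : (1 + (A * G)ᴴ * Sg⁻¹ * (A * G)) + ((1 - P) * H)ᴴ * ((1 - P) * H)
        = 1 + Gᴴ * (T - G * Gᴴ)⁻¹ * G := by
      rw [hX, ← h3, hY]; abel
    rwa [heq] at key
  · -- Part (ii)
    intro hTpd hGinj A D S hA hD hS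
    have hTiH : (T⁻¹).IsHermitian := hT.inv
    have hTd : IsUnit T.det := isUnit_iff_ne_zero.mpr hTpd.det_pos.ne'
    have hAeq : A = Gᴴ * T⁻¹ := by rw [hA, conjTranspose_mul, hTiH.eq]
    have hAH : Aᴴ = T⁻¹ * G := by rw [hA, conjTranspose_conjTranspose]
    have hATA : A * T * Aᴴ = Gᴴ * T⁻¹ * G := by
      rw [hAH, hAeq]
      simp only [Matrix.mul_assoc]
      rw [mul_nonsing_inv_cancel_left _ _ hTd]
    have hDeq : D = Gᴴ * T⁻¹ * G := by rw [hD, hAeq]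
    set D0 := Gᴴ * T⁻¹ * G with hD0
    have hD0pd : D0.PosDef := myPosDefConj hTpd.inv G hGinj
    clear_value D0
    have hD0H : D0ᴴ = D0 := hD0pd.1
    have hD0d : IsUnit D0.det := isUnit_iff_ne_zero.mpr hD0pd.det_pos.ne'
    have hSeq : S = D0 - D0 * D0 := by rw [hS, hATA, hDeq, hD0H]
    have hTinj : Function.Injective (T⁻¹).mulVec :=
      Matrix.mulVec_injective_iff_isUnit.mpr
        ((Matrix.isUnit_iff_isUnit_det _).mpr
          (isUnit_iff_ne_zero.mpr hTpd.inv.det_pos.ne'))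
    have hUinj : Function.Injective (T⁻¹ * G).mulVec := by
      intro x y hxy
      apply hGinj; apply hTinj
      simpa only [Matrix.mulVec_mulVec] using hxy
    have hSconj : S = (T⁻¹ * G)ᴴ * (T - G * Gᴴ) * (T⁻¹ * G) := by
      rw [hSeq, hD0, conjTranspose_mul, hTiH.eq]
      simp only [Matrix.mul_sub, Matrix.sub_mul, Matrix.mul_assoc]
      rw [mul_nonsing_inv_cancel_left _ _ hTd]
    have hSpd : S.PosDef := by
      rw [hSconj]; exact myPosDefConj hM (T⁻¹ * G) hUinj
    refine ⟨hSpd, ?_⟩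
    have hSfact : S = D0 * (1 - D0) := by rw [hSeq, Matrix.mul_sub, Matrix.mul_one]
    have hSd : IsUnit S.det := isUnit_iff_ne_zero.mpr hSpd.det_pos.ne'
    have h1Dd : IsUnit (1 - D0).det := by
      have hdet : S.det = D0.det * (1 - D0).det := by rw [hSfact, det_mul]
      rw [hdet] at hSd
      exact (isUnit_of_mul_isUnit_right hSd)
    have hSinv : S⁻¹ = (1 - D0)⁻¹ * D0⁻¹ := by rw [hSfact, Matrix.mul_inv_rev]
    have hLHS : Dᴴ * S⁻¹ * D = D0 * (1 - D0)⁻¹ := by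
      rw [hDeq, hD0H, hSinv]
      simp only [Matrix.mul_assoc]
      rw [nonsing_inv_mul _ hD0d, Matrix.mul_one]
    have hMd : IsUnit (T - G * Gᴴ).det := isUnit_iff_ne_zero.mpr hM.det_pos.ne'
    have hWood : (T - G * Gᴴ)⁻¹ * G = T⁻¹ * G * (1 - D0)⁻¹ := by
      have h5 : (T - G * Gᴴ) * (T⁻¹ * G) = G * (1 - D0) := by
        rw [hD0, Matrix.sub_mul, Matrix.mul_sub, Matrix.mul_one]
        simp only [Matrix.mul_assoc]
        rw [mul_nonsing_inv_cancel_left _ _ hTd]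
      have hkey : (T - G * Gᴴ) * (T⁻¹ * G * (1 - D0)⁻¹) = G := by
        calc (T - G * Gᴴ) * (T⁻¹ * G * (1 - D0)⁻¹)
            = ((T - G * Gᴴ) * (T⁻¹ * G)) * (1 - D0)⁻¹ := by
              simp only [Matrix.mul_assoc]
          _ = G * ((1 - D0) * (1 - D0)⁻¹) := by rw [h5, Matrix.mul_assoc]
          _ = G := by rw [mul_nonsing_inv _ h1Dd, Matrix.mul_one]
      calc (T - G * Gᴴ)⁻¹ * G
          = (T - G * Gᴴ)⁻¹ * ((T - G * Gᴴ) * (T⁻¹ * G * (1 - D0)⁻¹)) := by rw [hkey]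
        _ = T⁻¹ * G * (1 - D0)⁻¹ := nonsing_inv_mul_cancel_left _ _ hMd
    rw [hLHS, Matrix.mul_assoc Gᴴ, hWood, hD0]
    simp only [Matrix.mul_assoc]
end

section
/- Let C be an m×m Hermitian positive definite complex matrix and V an m×n complex matrix such that V^H C V is invertible. Then C^{−1} − V (V^H C V)^{−1} V^H is positive semidefinite; equivalently, for every m×n complex matrix B, the matrix B^H C^{−1} B − (V^H B)^H (V^H C V)^{−1} (V^H B) is positive semidefinite. (Key matrix Cauchy–Schwarz-type inequality underlying the optimality of MMSE combining and of the LSFD coefficient matrix.) -/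
open Matrix
open scoped ComplexOrder

/-- Key matrix Cauchy–Schwarz-type inequality: for `C ≻ 0` and `V` with `Vᴴ C V`
invertible, `C⁻¹ − V (Vᴴ C V)⁻¹ Vᴴ ⪰ 0`; equivalently, for every `B`,
`Bᴴ C⁻¹ B − (Vᴴ B)ᴴ (Vᴴ C V)⁻¹ (Vᴴ B) ⪰ 0`. -/
theorem stmt5 {m n : ℕ} (C : Matrix (Fin m) (Fin m) ℂ) (V : Matrix (Fin m) (Fin n) ℂ)
    (hC : C.PosDef) (hV : IsUnit (Vᴴ * C * V)) :
    (C⁻¹ - V * (Vᴴ * C * V)⁻¹ * Vᴴ).PosSemidef ∧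
    ∀ B : Matrix (Fin m) (Fin n) ℂ,
      (Bᴴ * C⁻¹ * B - (Vᴴ * B)ᴴ * (Vᴴ * C * V)⁻¹ * (Vᴴ * B)).PosSemidef := by
  set M := Vᴴ * C * V with hM
  have hCdet : IsUnit C.det := (Matrix.isUnit_iff_isUnit_det _).1 hC.isUnit
  have hMdet : IsUnit M.det := (Matrix.isUnit_iff_isUnit_det _).1 hV
  have hCi : C * C⁻¹ = 1 := Matrix.mul_nonsing_inv _ hCdet
  have hiC : C⁻¹ * C = 1 := Matrix.nonsing_inv_mul _ hCdet
  have hMi : M⁻¹ * M = 1 := Matrix.nonsing_inv_mul _ hMdet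
  set D := C⁻¹ - V * M⁻¹ * Vᴴ with hD
  have hMH : Mᴴ = M := by
    simp [hM, Matrix.conjTranspose_mul, hC.isHermitian.eq, Matrix.mul_assoc]
  have hMiH : (M⁻¹)ᴴ = M⁻¹ := by
    rw [Matrix.conjTranspose_nonsing_inv, hMH]
  have hDH : Dᴴ = D := by
    simp [hD, Matrix.conjTranspose_sub, Matrix.conjTranspose_mul, hMiH,
      Matrix.conjTranspose_nonsing_inv, hC.isHermitian.eq, Matrix.mul_assoc]
  have key : D * C * D = D := by
    have h1 : D * C = 1 - V * M⁻¹ * Vᴴ * C := by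
      rw [hD, Matrix.sub_mul, hiC]
    rw [h1, Matrix.sub_mul, Matrix.one_mul, hD]
    have h2 : V * M⁻¹ * Vᴴ * C * (C⁻¹ - V * M⁻¹ * Vᴴ)
        = V * M⁻¹ * Vᴴ - V * M⁻¹ * Vᴴ := by
      rw [Matrix.mul_sub]
      congr 1
      · rw [Matrix.mul_assoc (V * M⁻¹ * Vᴴ) C C⁻¹, hCi, Matrix.mul_one]
      · calc V * M⁻¹ * Vᴴ * C * (V * M⁻¹ * Vᴴ)
            = V * M⁻¹ * (Vᴴ * C * V) * (M⁻¹ * Vᴴ) := by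
              simp only [Matrix.mul_assoc]
          _ = V * (M⁻¹ * M * M⁻¹) * Vᴴ := by
              rw [← hM]; simp only [Matrix.mul_assoc]
          _ = V * M⁻¹ * Vᴴ := by rw [hMi, Matrix.one_mul, Matrix.mul_assoc]
    rw [h2, sub_self, sub_zero]
  have hPSD : D.PosSemidef := by
    have := hC.posSemidef.conjTranspose_mul_mul_same D
    rwa [hDH, key] at this
  refine ⟨hPSD, fun B => ?_⟩
  have : Bᴴ * C⁻¹ * B - (Vᴴ * B)ᴴ * M⁻¹ * (Vᴴ * B) = Bᴴ * D * B := by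
    rw [hD, Matrix.conjTranspose_mul, Matrix.conjTranspose_conjTranspose,
      Matrix.mul_sub, Matrix.sub_mul]
    simp only [Matrix.mul_assoc]
  rw [this]
  exact hPSD.conjTranspose_mul_mul_same B
end

section
/- Let U_r be an L×L unitary complex matrix, U_t an N×N unitary complex matrix, and W̃ a deterministic L×N real (entrywise) matrix. Let X be a random L×N complex matrix whose LN entries X_{ij} are mutually independent, each with mean 0 and E{|X_{ij}|²} = 1 (and all entries integrable with integrable squared modulus). Define the random matrix H̃ := U_r (W̃ ⊙ X) U_t^H, where ⊙ is the entrywise (Hadamard) product. Then the full correlation matrix R := E{vec(H̃) vec(H̃)^H} ∈ ℂ^{LN×LN} satisfies R = (conj(U_t) ⊗ U_r) · Diag(vec(W)) · (conj(U_t) ⊗ U_r)^H, where W := W̃ ⊙ W̃, Diag(v) is the diagonal matrix with the vector v on its diagonal, conj denotes entrywise complex conjugation, and ⊗ is the Kronecker product. (Structure of the full correlation matrix of the NLoS component of the Weichselberger channel model.) -/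
open Matrix MeasureTheory ProbabilityTheory
open scoped Kronecker

/-- Column-stacking vectorization of an `L × N` matrix: the entry of `vec M`
at index `(j, i)` (column `j`, row `i`) is `M i j`. -/
def vecc {α : Type*} {L N : ℕ} (M : Matrix (Fin L) (Fin N) α) : Fin N × Fin L → α :=
  fun p => M p.2 p.1

lemma my_integral_re {Ω : Type*} [MeasurableSpace Ω] {μ : Measure Ω}
    {f : Ω → ℂ} (hf : Integrable f μ) : (∫ ω, f ω ∂μ).re = ∫ ω, (f ω).re ∂μ := by
  have := integral_re (𝕜 := ℂ) hf
  simpa using this.symm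

lemma my_integral_im {Ω : Type*} [MeasurableSpace Ω] {μ : Measure Ω}
    {f : Ω → ℂ} (hf : Integrable f μ) : (∫ ω, f ω ∂μ).im = ∫ ω, (f ω).im ∂μ := by
  have := integral_im (𝕜 := ℂ) hf
  simpa using this.symm

lemma my_integrable_conj {Ω : Type*} [MeasurableSpace Ω] {μ : Measure Ω}
    {f : Ω → ℂ} (hf : Integrable f μ) :
    Integrable (fun ω => (starRingEnd ℂ) (f ω)) μ := by
  refine ⟨Complex.continuous_conj.comp_aestronglyMeasurable hf.1, ?_⟩
  simpa [HasFiniteIntegral] using hf.2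

lemma my_measurable_conj : Measurable fun z : ℂ => (starRingEnd ℂ) z :=
  Complex.continuous_conj.measurable

lemma my_integral_ofReal {Ω : Type*} [MeasurableSpace Ω] {μ : Measure Ω}
    {f : Ω → ℝ} (hf : Integrable f μ) :
    ∫ ω, ((f ω : ℝ) : ℂ) ∂μ = ((∫ ω, f ω ∂μ : ℝ) : ℂ) := by
  exact integral_ofReal

/-- Complex version of `IndepFun.integral_mul_of_integrable`. -/
lemma indep_integral_mul_cplx {Ω : Type*} [MeasurableSpace Ω] {μ : Measure Ω}
    {f g : Ω → ℂ} (h : IndepFun f g μ) (hf : Integrable f μ) (hg : Integrable g μ) :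
    ∫ ω, f ω * g ω ∂μ = (∫ ω, f ω ∂μ) * ∫ ω, g ω ∂μ := by
  have hfg : Integrable (fun ω => f ω * g ω) μ := h.integrable_mul hf hg
  have hfr : Integrable (fun ω => (f ω).re) μ := hf.re
  have hfi : Integrable (fun ω => (f ω).im) μ := hf.im
  have hgr : Integrable (fun ω => (g ω).re) μ := hg.re
  have hgi : Integrable (fun ω => (g ω).im) μ := hg.im
  have hrr : IndepFun (fun ω => (f ω).re) (fun ω => (g ω).re) μ :=
    h.comp Complex.measurable_re Complex.measurable_re
  have hri : IndepFun (fun ω => (f ω).re) (fun ω => (g ω).im) μ :=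
    h.comp Complex.measurable_re Complex.measurable_im
  have hir : IndepFun (fun ω => (f ω).im) (fun ω => (g ω).re) μ :=
    h.comp Complex.measurable_im Complex.measurable_re
  have hii : IndepFun (fun ω => (f ω).im) (fun ω => (g ω).im) μ :=
    h.comp Complex.measurable_im Complex.measurable_im
  have irr : Integrable (fun ω => (f ω).re * (g ω).re) μ := hrr.integrable_mul hfr hgr
  have iri : Integrable (fun ω => (f ω).re * (g ω).im) μ := hri.integrable_mul hfr hgi
  have iir : Integrable (fun ω => (f ω).im * (g ω).re) μ := hir.integrable_mul hfi hgr
  have iii : Integrable (fun ω => (f ω).im * (g ω).im) μ := hii.integrable_mul hfi hgi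
  have Irr : ∫ ω, (f ω).re * (g ω).re ∂μ = (∫ ω, (f ω).re ∂μ) * ∫ ω, (g ω).re ∂μ :=
    IndepFun.integral_fun_mul_eq_mul_integral hrr hfr.1 hgr.1
  have Iri : ∫ ω, (f ω).re * (g ω).im ∂μ = (∫ ω, (f ω).re ∂μ) * ∫ ω, (g ω).im ∂μ :=
    IndepFun.integral_fun_mul_eq_mul_integral hri hfr.1 hgi.1
  have Iir : ∫ ω, (f ω).im * (g ω).re ∂μ = (∫ ω, (f ω).im ∂μ) * ∫ ω, (g ω).re ∂μ :=
    IndepFun.integral_fun_mul_eq_mul_integral hir hfi.1 hgr.1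
  have Iii : ∫ ω, (f ω).im * (g ω).im ∂μ = (∫ ω, (f ω).im ∂μ) * ∫ ω, (g ω).im ∂μ :=
    IndepFun.integral_fun_mul_eq_mul_integral hii hfi.1 hgi.1
  apply Complex.ext
  · rw [my_integral_re hfg, Complex.mul_re, my_integral_re hf, my_integral_re hg,
      my_integral_im hf, my_integral_im hg]
    simp only [Complex.mul_re]
    rw [integral_sub irr iii, Irr, Iii]
  · rw [my_integral_im hfg, Complex.mul_im, my_integral_re hf, my_integral_re hg,
      my_integral_im hf, my_integral_im hg]
    simp only [Complex.mul_im]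
    rw [integral_add iri iir, Iri, Iir]

/-- Structure of the full correlation matrix of the NLoS component of the
Weichselberger channel model: for `H̃ = U_r (W̃ ⊙ X) U_tᴴ` with independent,
zero-mean, unit-second-moment entries `X_{ij}`, one has
`E{vec(H̃) vec(H̃)ᴴ} = (conj U_t ⊗ U_r) Diag(vec(W̃ ⊙ W̃)) (conj U_t ⊗ U_r)ᴴ`. -/
theorem stmt10 {L N : ℕ} {Ω : Type*} [MeasurableSpace Ω] (μ : Measure Ω)
    [IsProbabilityMeasure μ]
    (Ur : Matrix (Fin L) (Fin L) ℂ) (Ut : Matrix (Fin N) (Fin N) ℂ)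
    (hUr : Ur ∈ Matrix.unitaryGroup (Fin L) ℂ)
    (hUt : Ut ∈ Matrix.unitaryGroup (Fin N) ℂ)
    (Wt : Matrix (Fin L) (Fin N) ℝ)
    (X : Ω → Matrix (Fin L) (Fin N) ℂ)
    (hindep : iIndepFun
      (fun (p : Fin L × Fin N) ω => X ω p.1 p.2) μ)
    (hint : ∀ i j, Integrable (fun ω => X ω i j) μ)
    (hint2 : ∀ i j, Integrable (fun ω => ‖X ω i j‖ ^ 2) μ)
    (hmean : ∀ i j, ∫ ω, X ω i j ∂μ = 0)
    (hvar : ∀ i j, ∫ ω, ‖X ω i j‖ ^ 2 ∂μ = 1) :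
    Matrix.of (fun p q : Fin N × Fin L =>
        ∫ ω, vecc (Ur * ((Wt.map Complex.ofReal).hadamard (X ω)) * Utᴴ) p *
          (starRingEnd ℂ) (vecc (Ur * ((Wt.map Complex.ofReal).hadamard (X ω)) * Utᴴ) q) ∂μ)
      = ((Ut.map (starRingEnd ℂ)) ⊗ₖ Ur) *
          Matrix.diagonal (vecc ((Wt.hadamard Wt).map Complex.ofReal)) *
          ((Ut.map (starRingEnd ℂ)) ⊗ₖ Ur)ᴴ := by
  classical
  set c : (Fin N × Fin L) → (Fin L × Fin N) → ℂ :=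
    fun p r => Ur p.2 r.1 * (Wt r.1 r.2 : ℂ) * (starRingEnd ℂ) (Ut p.1 r.2) with hc
  -- expansion of the vectorized channel
  have hvec : ∀ (ω : Ω) (p : Fin N × Fin L),
      vecc (Ur * ((Wt.map Complex.ofReal).hadamard (X ω)) * Utᴴ) p
        = ∑ r : Fin L × Fin N, c p r * X ω r.1 r.2 := by
    intro ω p
    simp only [vecc, Matrix.mul_apply, Matrix.conjTranspose_apply, Matrix.hadamard_apply,
      Matrix.map_apply, Finset.sum_mul, hc, starRingEnd_apply]
    rw [Fintype.sum_prod_type, Finset.sum_comm]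
    refine Finset.sum_congr rfl fun b _ => Finset.sum_congr rfl fun a _ => ?_
    ring
  -- second moments
  have key : ∀ r s : Fin L × Fin N,
      ∫ ω, X ω r.1 r.2 * (starRingEnd ℂ) (X ω s.1 s.2) ∂μ = if r = s then 1 else 0 := by
    intro r s
    by_cases hrs : r = s
    · subst hrs
      simp only [if_pos rfl]
      have hfun : ∀ ω, X ω r.1 r.2 * (starRingEnd ℂ) (X ω r.1 r.2)
          = ((‖X ω r.1 r.2‖ ^ 2 : ℝ) : ℂ) := by
        intro ω
        rw [Complex.mul_conj]
        norm_cast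
        simp [Complex.normSq_eq_norm_sq]
      simp_rw [hfun]
      rw [my_integral_ofReal (hint2 r.1 r.2), hvar]
      simp
    · simp only [if_neg hrs]
      have hind : IndepFun (fun ω => X ω r.1 r.2) (fun ω => X ω s.1 s.2) μ :=
        hindep.indepFun hrs
      have hind2 : IndepFun (fun ω => X ω r.1 r.2)
          (fun ω => (starRingEnd ℂ) (X ω s.1 s.2)) μ :=
        hind.comp measurable_id my_measurable_conj
      rw [indep_integral_mul_cplx hind2 (hint r.1 r.2) (my_integrable_conj (hint s.1 s.2)),
        hmean, zero_mul]
  -- integrability of products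
  have hprod_int : ∀ r s : Fin L × Fin N,
      Integrable (fun ω => X ω r.1 r.2 * (starRingEnd ℂ) (X ω s.1 s.2)) μ := by
    intro r s
    by_cases hrs : r = s
    · subst hrs
      have hfun : (fun ω => X ω r.1 r.2 * (starRingEnd ℂ) (X ω r.1 r.2))
          = fun ω => ((‖X ω r.1 r.2‖ ^ 2 : ℝ) : ℂ) := by
        funext ω
        rw [Complex.mul_conj]
        norm_cast
        simp [Complex.normSq_eq_norm_sq]
      rw [hfun]
      exact (hint2 r.1 r.2).ofReal
    · have hind : IndepFun (fun ω => X ω r.1 r.2) (fun ω => X ω s.1 s.2) μ :=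
        hindep.indepFun hrs
      exact (hind.comp measurable_id my_measurable_conj).integrable_mul
        (hint r.1 r.2) (my_integrable_conj (hint s.1 s.2))
  ext p q
  show (∫ ω, vecc (Ur * ((Wt.map Complex.ofReal).hadamard (X ω)) * Utᴴ) p *
          (starRingEnd ℂ) (vecc (Ur * ((Wt.map Complex.ofReal).hadamard (X ω)) * Utᴴ) q) ∂μ)
      = _
  have expand : ∀ ω : Ω,
      vecc (Ur * ((Wt.map Complex.ofReal).hadamard (X ω)) * Utᴴ) p *
        (starRingEnd ℂ) (vecc (Ur * ((Wt.map Complex.ofReal).hadamard (X ω)) * Utᴴ) q)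
      = ∑ z : (Fin L × Fin N) × (Fin L × Fin N),
          (c p z.1 * (starRingEnd ℂ) (c q z.2)) *
            (X ω z.1.1 z.1.2 * (starRingEnd ℂ) (X ω z.2.1 z.2.2)) := by
    intro ω
    rw [hvec ω p, hvec ω q, map_sum, Finset.sum_mul_sum]
    conv_rhs => rw [Fintype.sum_prod_type]
    refine Finset.sum_congr rfl fun r _ => Finset.sum_congr rfl fun s _ => ?_
    dsimp only
    rw [_root_.map_mul]
    ring
  simp_rw [expand]
  rw [integral_finset_sum _ (fun z _ => ((hprod_int z.1 z.2).const_mul _))]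
  have step : ∀ z : (Fin L × Fin N) × (Fin L × Fin N),
      ∫ ω, (c p z.1 * (starRingEnd ℂ) (c q z.2)) *
          (X ω z.1.1 z.1.2 * (starRingEnd ℂ) (X ω z.2.1 z.2.2)) ∂μ
        = if z.1 = z.2 then c p z.1 * (starRingEnd ℂ) (c q z.2) else 0 := by
    intro z
    rw [integral_const_mul, key z.1 z.2]
    by_cases h : z.1 = z.2 <;> simp [h]
  simp_rw [step]
  rw [Fintype.sum_prod_type]
  simp only [Finset.sum_ite_eq, Finset.mem_univ, if_true]
  -- now compute the RHS entry
  rw [Matrix.mul_apply]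
  have hAD : ∀ s : Fin N × Fin L,
      (((Ut.map (starRingEnd ℂ)) ⊗ₖ Ur) *
        Matrix.diagonal (vecc ((Wt.hadamard Wt).map Complex.ofReal))) p s
      = ((Ut.map (starRingEnd ℂ)) ⊗ₖ Ur) p s *
          (((Wt.hadamard Wt).map Complex.ofReal) s.2 s.1) := by
    intro s
    rw [Matrix.mul_diagonal]
    rfl
  simp only [hAD, Matrix.conjTranspose_apply, Matrix.kroneckerMap_apply, Matrix.map_apply,
    Matrix.hadamard_apply]
  refine Fintype.sum_equiv (Equiv.prodComm (Fin L) (Fin N)) _ _ fun r => ?_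
  simp only [Equiv.prodComm_apply, Prod.fst_swap, Prod.snd_swap, hc, star_mul',
    ← starRingEnd_apply, _root_.map_mul, Complex.conj_conj, Complex.conj_ofReal,
    Complex.ofReal_mul]
  ring
end
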